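/- Let 𝒞 be a ℂ-linear subspace of the functions D → ℂ invariant under complex conjugation and let f ∈ 𝒞. Then f is complex conjugate phase retrieval in 𝒞 if and only if there do not exist u, v ∈ 𝒞 such that (i) f = u + v, (ii) Re(u(x)·conj(v(x))) = 0 for all x ∈ D, and (iii) Re(u(x)·conj(v(y)) + u(y)·conj(v(x))) ≠ 0 for some x, y ∈ D. -/

import Mathlib

open Complex

private lemma re_eq_cases (w w' : ℂ) (h1 : ‖w'‖ = ‖w‖) (h2 : w'.re = w.re) :
    w' = w ∨ w' = (starRingEnd ℂ) w := by
  have hsq : w'.re^2 + w'.im^2 = w.re^2 + w.im^2 := by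
    have h := congrArg (·^2) h1
    simp only [Complex.sq_norm, Complex.normSq_apply] at h
    nlinarith [h]
  have him : w'.im = w.im ∨ w'.im = -w.im := by
    have hre2 : w'.re^2 = w.re^2 := by rw [h2]
    have h3 : w'.im^2 = w.im^2 := by linarith
    exact sq_eq_sq_iff_eq_or_eq_neg.mp h3
  rcases him with h | h
  · left; exact Complex.ext h2 h
  · right
    refine Complex.ext ?_ ?_ <;> simp [h2, h]

private lemma gram_lemma {D : Type*} (f g : D → ℂ)
    (habs : ∀ x, ‖g x‖ = ‖f x‖)
    (hre : ∀ x y, (g x * (starRingEnd ℂ) (g y)).re = (f x * (starRingEnd ℂ) (f y)).re) :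
    (∃ z : ℂ, ‖z‖ = 1 ∧ g = fun x => z * f x) ∨
    (∃ z : ℂ, ‖z‖ = 1 ∧ g = fun x => z * (starRingEnd ℂ) (f x)) := by
  -- pairwise dichotomy
  have dich : ∀ x y, g x * (starRingEnd ℂ) (g y) = f x * (starRingEnd ℂ) (f y) ∨
      g x * (starRingEnd ℂ) (g y) = (starRingEnd ℂ) (f x) * f y := by
    intro x y
    have h1 : ‖g x * (starRingEnd ℂ) (g y)‖ =
        ‖f x * (starRingEnd ℂ) (f y)‖ := by
      simp [map_mul, habs]
    rcases re_eq_cases _ _ h1 (hre x y) with h | h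
    · exact Or.inl h
    · right; rw [h]; simp [mul_comm]
  by_cases hfz : ∀ x, f x = 0
  · left
    refine ⟨1, by simp, funext fun x => ?_⟩
    have : ‖g x‖ = 0 := by rw [habs x, hfz x]; simp
    simp [hfz x, norm_eq_zero.mp this]
  push_neg at hfz
  obtain ⟨x₀, hx₀⟩ := hfz
  have hg₀ : g x₀ ≠ 0 := by
    intro h
    apply hx₀
    have := habs x₀
    rw [h] at this
    rw [norm_zero] at this
    exact norm_eq_zero.mp this.symm
  have hcg₀ : (starRingEnd ℂ) (g x₀) ≠ 0 := by simpa using hg₀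
  set z₁ : ℂ := (starRingEnd ℂ) (f x₀) / (starRingEnd ℂ) (g x₀) with hz₁
  set z₂ : ℂ := f x₀ / (starRingEnd ℂ) (g x₀) with hz₂
  have habsz₁ : ‖z₁‖ = 1 := by
    rw [hz₁, norm_div, Complex.norm_conj, Complex.norm_conj, ← habs x₀,
      div_self (norm_ne_zero_iff.mpr hg₀)]
  have habsz₂ : ‖z₂‖ = 1 := by
    rw [hz₂, norm_div, Complex.norm_conj, ← habs x₀, div_self (norm_ne_zero_iff.mpr hg₀)]
  have D1 : ∀ x, g x = z₁ * f x ∨ g x = z₂ * (starRingEnd ℂ) (f x) := by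
    intro x
    rcases dich x x₀ with h | h
    · left
      rw [hz₁, div_mul_eq_mul_div, eq_div_iff hcg₀, h]; ring
    · right
      rw [hz₂, div_mul_eq_mul_div, eq_div_iff hcg₀, h]; ring
  by_cases hall : ∀ x, g x = z₁ * f x
  · exact Or.inl ⟨z₁, habsz₁, funext hall⟩
  push_neg at hall
  obtain ⟨a, ha⟩ := hall
  have hga : g a = z₂ * (starRingEnd ℂ) (f a) := (D1 a).resolve_left ha
  have hfa : f a ≠ 0 := by
    intro h
    apply ha
    have : ‖g a‖ = 0 := by rw [habs a, h]; simp
    simp [h, norm_eq_zero.mp this]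
  have hz₂ne : z₂ ≠ 0 := by
    intro h; rw [h] at habsz₂; simp at habsz₂
  have hz₂conj : z₂ * (starRingEnd ℂ) z₂ = 1 := by
    rw [Complex.mul_conj]
    norm_cast
    rw [← Complex.sq_norm, habsz₂]; norm_num
  right
  refine ⟨z₂, habsz₂, funext fun x => ?_⟩
  rcases D1 x with hx | hx
  · -- g x = z₁ * f x; use the pair (x, a)
    by_cases hfx : f x = 0
    · have : ‖g x‖ = 0 := by rw [habs x, hfx]; simp
      simp [hfx, norm_eq_zero.mp this]
    rcases dich x a with h | h
    · -- g x * conj (g a) = f x * conj (f a) ⟹ z₁ f a = g a, contradiction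
      exfalso
      apply ha
      rw [hga, hx] at h
      simp only [map_mul, Complex.conj_conj] at h
      -- z₁ * f x * (conj z₂ * f a) = f x * conj (f a)
      have h1 : z₁ * (starRingEnd ℂ) z₂ * f a = (starRingEnd ℂ) (f a) := by
        apply mul_right_cancel₀ hfx
        linear_combination h
      rw [hga]
      linear_combination (-z₂) * h1 + (z₁ * f a) * hz₂conj
    · -- g x * conj (g a) = conj (f x) * f a ⟹ g x = z₂ conj (f x)
      rw [hga] at h
      simp only [map_mul, Complex.conj_conj] at h
      have h' : g x * (starRingEnd ℂ) z₂ = (starRingEnd ℂ) (f x) := by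
        apply mul_right_cancel₀ hfa
        linear_combination h
      linear_combination z₂ * h' - g x * hz₂conj
  · exact hx

private lemma key_id (a b c d : ℂ) :
    ((a+b) * (starRingEnd ℂ) (c+d)).re - ((a-b) * (starRingEnd ℂ) (c-d)).re
      = 2 * (a * (starRingEnd ℂ) d + c * (starRingEnd ℂ) b).re := by
  simp [Complex.mul_re, Complex.add_re, Complex.add_im, Complex.sub_re, Complex.sub_im,
    Complex.conj_re, Complex.conj_im]
  ring

private lemma re_add_mul_conj_sub (a b : ℂ) (h : ‖b‖ = ‖a‖) :
    ((a + b) * (starRingEnd ℂ) (a - b)).re = 0 := by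
  have h2 : Complex.normSq b = Complex.normSq a := by
    rw [← Complex.sq_norm, ← Complex.sq_norm, h]
  simp only [Complex.normSq_apply] at h2
  simp only [Complex.mul_re, Complex.add_re, Complex.add_im, Complex.sub_re, Complex.sub_im,
    Complex.conj_re, Complex.conj_im]
  linear_combination -h2

private lemma half_mul_re (w w' : ℂ) :
    ((2⁻¹:ℂ) * w * (starRingEnd ℂ) ((2⁻¹:ℂ) * w')).re
      = 4⁻¹ * (w * (starRingEnd ℂ) w').re := by
  have : (2⁻¹:ℂ) * w * (starRingEnd ℂ) ((2⁻¹:ℂ) * w')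
      = (((4:ℝ)⁻¹ : ℝ) : ℂ) * (w * (starRingEnd ℂ) w') := by
    rw [map_mul]
    rw [show (starRingEnd ℂ) (2⁻¹:ℂ) = (2⁻¹:ℂ) by rw [map_inv₀, Complex.conj_ofNat]]
    push_cast
    ring
  rw [this, Complex.re_ofReal_mul]
/-- **Theorem 2.1 (complex conjugate phase retrieval of a function).**
Let `C` be a ℂ-linear subspace of functions `D → ℂ` invariant under complex conjugation
and `f ∈ C`.  Then `f` is complex conjugate phase retrieval in `C` if and only if
there do not exist `u, v ∈ C` with `f = u + v`, `Re (u x * conj (v x)) = 0` for all `x`,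
and `Re (u x * conj (v y) + u y * conj (v x)) ≠ 0` for some `x, y`. -/
theorem stmt_0 {D : Type*} [Nonempty D] (C : Submodule ℂ (D → ℂ))
    (hconj : ∀ f ∈ C, (fun x => (starRingEnd ℂ) (f x)) ∈ C)
    (f : D → ℂ) (hf : f ∈ C) :
    ({g : D → ℂ | g ∈ C ∧ ∀ x, ‖g x‖ = ‖f x‖} =
        {g : D → ℂ | ∃ z : ℂ, ‖z‖ = 1 ∧ g = fun x => z * f x} ∪
        {g : D → ℂ | ∃ z : ℂ, ‖z‖ = 1 ∧ g = fun x => z * (starRingEnd ℂ) (f x)}) ↔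
      ¬ ∃ u ∈ C, ∃ v ∈ C, f = u + v ∧
          (∀ x, (u x * (starRingEnd ℂ) (v x)).re = 0) ∧
          (∃ x y, (u x * (starRingEnd ℂ) (v y) + u y * (starRingEnd ℂ) (v x)).re ≠ 0) := by
  constructor
  · -- set equality ⇒ no bad decomposition
    intro heq
    rintro ⟨u, hu, v, hv, hfuv, hptw, x, y, hxy⟩
    set g : D → ℂ := u - v with hgdef
    have hgC : g ∈ C := C.sub_mem hu hv
    have hfx : ∀ t, f t = u t + v t := by intro t; rw [hfuv]; rfl
    have hgx : ∀ t, g t = u t - v t := fun t => rfl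
    have habs : ∀ t, ‖g t‖ = ‖f t‖ := by
      intro t
      rw [hfx t, hgx t]
      have h0 := hptw t
      -- |u-v| = |u+v|
      have hsq : Complex.normSq (u t - v t) = Complex.normSq (u t + v t) := by
        simp only [Complex.normSq_apply, Complex.sub_re, Complex.sub_im, Complex.add_re,
          Complex.add_im]
        simp only [Complex.mul_re, Complex.conj_re, Complex.conj_im] at h0
        linear_combination (-4:ℝ) * h0
      rw [Complex.norm_def, Complex.norm_def, hsq]
    have hg_mem : g ∈ {g : D → ℂ | g ∈ C ∧ ∀ x, ‖g x‖ = ‖f x‖} :=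
      ⟨hgC, habs⟩
    rw [heq] at hg_mem
    have hz1 : ∀ z : ℂ, ‖z‖ = 1 → z * (starRingEnd ℂ) z = 1 := by
      intro z hz
      rw [Complex.mul_conj]
      norm_cast
      rw [← Complex.sq_norm, hz]; norm_num
    have hR : ∀ s t, (g s * (starRingEnd ℂ) (g t)).re = (f s * (starRingEnd ℂ) (f t)).re := by
      rcases hg_mem with ⟨z, hz, hgz⟩ | ⟨z, hz, hgz⟩
      · intro s t
        have : g s * (starRingEnd ℂ) (g t) = f s * (starRingEnd ℂ) (f t) := by
          rw [hgz]
          simp only [map_mul]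
          linear_combination (f s * (starRingEnd ℂ) (f t)) * hz1 z hz
        rw [this]
      · intro s t
        have : g s * (starRingEnd ℂ) (g t) = (starRingEnd ℂ) (f s * (starRingEnd ℂ) (f t)) := by
          rw [hgz]
          simp only [map_mul, Complex.conj_conj]
          linear_combination ((starRingEnd ℂ) (f s) * f t) * hz1 z hz
        rw [this, Complex.conj_re]
    apply hxy
    have hid := key_id (u x) (v x) (u y) (v y)
    have hRxy := hR x y
    rw [hfx x, hfx y, hgx x, hgx y] at hRxy
    linarith
  · -- no bad decomposition ⇒ set equality
    intro hne
    ext g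
    simp only [Set.mem_setOf_eq, Set.mem_union]
    constructor
    · rintro ⟨hgC, habs⟩
      set u : D → ℂ := (2⁻¹ : ℂ) • (f + g) with hudef
      set v : D → ℂ := (2⁻¹ : ℂ) • (f - g) with hvdef
      have huC : u ∈ C := C.smul_mem _ (C.add_mem hf hgC)
      have hvC : v ∈ C := C.smul_mem _ (C.sub_mem hf hgC)
      have huapp : ∀ t, u t = (2⁻¹:ℂ) * (f t + g t) := fun t => rfl
      have hvapp : ∀ t, v t = (2⁻¹:ℂ) * (f t - g t) := fun t => rfl
      have hfuv : f = u + v := by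
        funext t
        show f t = u t + v t
        rw [huapp, hvapp]; ring
      have hptw : ∀ t, (u t * (starRingEnd ℂ) (v t)).re = 0 := by
        intro t
        rw [huapp, hvapp, half_mul_re, re_add_mul_conj_sub (f t) (g t) (habs t)]
        ring
      push_neg at hne
      have hall := hne u huC v hvC hfuv hptw
      have hguv : ∀ t, g t = u t - v t := by
        intro t; rw [huapp, hvapp]; ring
      have hR : ∀ s t, (g s * (starRingEnd ℂ) (g t)).re = (f s * (starRingEnd ℂ) (f t)).re := by
        intro s t
        have hid := key_id (u s) (v s) (u t) (v t)
        have h1 := hall s t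
        have hfs : f s = u s + v s := by rw [hfuv]; rfl
        have hft : f t = u t + v t := by rw [hfuv]; rfl
        rw [hfs, hft, hguv s, hguv t]
        linarith
      exact gram_lemma f g habs hR
    · rintro (⟨z, hz, rfl⟩ | ⟨z, hz, rfl⟩)
      · refine ⟨?_, fun x => by simp [map_mul, hz]⟩
        exact C.smul_mem z hf
      · refine ⟨?_, fun x => by simp [map_mul, hz]⟩
        exact C.smul_mem z (hconj f hf)
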